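/- Let X be a Banach space admitting an Auerbach basis (x_m; x_m*). Then the space c(X) of X-valued convergent sequences with sup norm admits an Auerbach basis. -/

import Mathlib

open scoped ENNReal
set_option synthInstance.maxHeartbeats 1000000
set_option maxHeartbeats 1000000
set_option linter.unusedSectionVars false

/-- The space of `X`-valued convergent sequences, as a subspace of `ℓ^∞(X)` (with the
sup norm). -/
noncomputable def cSubX (X : Type*) [NormedAddCommGroup X] [NormedSpace ℝ X] :
    Submodule ℝ (lp (fun _ : ℕ => X) ∞) where
  carrier := {y | ∃ L : X, Filter.Tendsto (fun n => y n) Filter.atTop (nhds L)}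
  zero_mem' := ⟨0, by simp⟩
  add_mem' := by
    rintro y z ⟨L1, h1⟩ ⟨L2, h2⟩
    refine ⟨L1 + L2, ?_⟩
    have := h1.add h2
    simpa [lp.coeFn_add] using this
  smul_mem' := by
    rintro c y ⟨L, h⟩
    refine ⟨c • L, ?_⟩
    have := h.const_smul c
    simpa [lp.coeFn_smul] using this

/-- The space `c` of convergent real sequences with the sup norm. -/
noncomputable abbrev cSub : Submodule ℝ (lp (fun _ : ℕ => ℝ) ∞) := cSubX ℝ

/-- An Auerbach basis of a normed space: a biorthogonal system of norm-one vectors and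
norm-one functionals which is fundamental (the closed linear span of the vectors is the
whole space) and total (the functionals separate points). -/
structure IsAuerbachBasis {X : Type*} [NormedAddCommGroup X] [NormedSpace ℝ X]
    {ι : Type*} (x : ι → X) (f : ι → X →L[ℝ] ℝ) : Prop where
  biorth_eq : ∀ k, f k (x k) = 1
  biorth_ne : ∀ k j, k ≠ j → f k (x j) = 0
  norm_vec : ∀ n, ‖x n‖ = 1
  norm_fun : ∀ n, ‖f n‖ = 1
  fundamental : (Submodule.span ℝ (Set.range x)).topologicalClosure = ⊤
  total : ∀ y, (∀ n, f n y = 0) → y = 0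

open Filter

namespace Stmt15Aux

variable {X : Type} [NormedAddCommGroup X] [NormedSpace ℝ X]

lemma mem_cSubX_iff {y : lp (fun _ : ℕ => X) ∞} :
    y ∈ cSubX X ↔ ∃ L : X, Tendsto (fun n => y n) atTop (nhds L) := Iff.rfl

/-- coordinate j < n : -a, else a -/
noncomputable def wFun (a : X) (n : ℕ) : ∀ _ : ℕ, X := fun j => if j < n then -a else a

lemma wFun_norm (a : X) (n j : ℕ) : ‖wFun a n j‖ = ‖a‖ := by
  unfold wFun; split <;> simp

lemma wFun_mem (a : X) (n : ℕ) : Memℓp (wFun a n) ∞ :=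
  memℓp_infty ⟨‖a‖, by rintro r ⟨j, rfl⟩; simp [wFun_norm]⟩

noncomputable def wLp (a : X) (n : ℕ) : lp (fun _ : ℕ => X) ∞ := ⟨wFun a n, wFun_mem a n⟩

@[simp] lemma wLp_apply (a : X) (n j : ℕ) : wLp a n j = if j < n then -a else a := rfl

noncomputable def wC (a : X) (n : ℕ) : cSubX X :=
  ⟨wLp a n, mem_cSubX_iff.mpr ⟨a, tendsto_atTop_of_eventually_const (i₀ := n)
    (fun j hj => by simp [Nat.not_lt.mpr hj])⟩⟩

@[simp] lemma wC_apply (a : X) (n j : ℕ) : ((wC a n : lp (fun _ : ℕ => X) ∞)) j = if j < n then -a else a := rfl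

lemma norm_wC (a : X) (n : ℕ) : ‖wC a n‖ = ‖a‖ := by
  rw [← Submodule.norm_coe]
  refine le_antisymm (lp.norm_le_of_forall_le' ‖a‖ fun j => le_of_eq (wFun_norm a n j)) ?_
  simpa using lp.norm_apply_le_norm ENNReal.top_ne_zero (wC a n : lp (fun _ : ℕ => X) ∞) n


noncomputable def limX (y : cSubX X) : X := (mem_cSubX_iff.mp y.2).choose

lemma tendsto_limX (y : cSubX X) :
    Tendsto (fun n => (y : lp (fun _ : ℕ => X) ∞) n) atTop (nhds (limX y)) :=
  (mem_cSubX_iff.mp y.2).choose_spec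

lemma limX_eq {y : cSubX X} {L : X}
    (h : Tendsto (fun n => (y : lp (fun _ : ℕ => X) ∞) n) atTop (nhds L)) : limX y = L :=
  tendsto_nhds_unique (tendsto_limX y) h

@[simp] lemma limX_wC (a : X) (n : ℕ) : limX (wC a n) = a :=
  limX_eq (tendsto_atTop_of_eventually_const (i₀ := n) (fun j hj => by simp [Nat.not_lt.mpr hj]))

/-- The limit, as a linear map. -/
noncomputable def limL : cSubX X →ₗ[ℝ] X where
  toFun := limX
  map_add' y z := limX_eq (by
    have := (tendsto_limX y).add (tendsto_limX z)
    refine this.congr fun n => ?_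
    simp [lp.coeFn_add])
  map_smul' c y := limX_eq (by
    have := (tendsto_limX y).const_smul c
    refine this.congr fun n => ?_
    simp [lp.coeFn_smul])

lemma norm_limX_le (y : cSubX X) : ‖limX y‖ ≤ ‖y‖ := by
  refine le_of_tendsto' (tendsto_limX y).norm fun n => ?_
  rw [← Submodule.norm_coe]
  exact lp.norm_apply_le_norm ENNReal.top_ne_zero _ n

/-- Evaluation at coordinate `j`, as a linear map. -/
noncomputable def coordL (j : ℕ) : cSubX X →ₗ[ℝ] X where
  toFun y := (y : lp (fun _ : ℕ => X) ∞) j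
  map_add' y z := by simp [lp.coeFn_add]
  map_smul' c y := by simp [lp.coeFn_smul]

@[simp] lemma coordL_apply (j : ℕ) (y : cSubX X) :
    coordL j y = (y : lp (fun _ : ℕ => X) ∞) j := rfl

lemma norm_coordL_le (j : ℕ) (y : cSubX X) : ‖coordL j y‖ ≤ ‖y‖ := by
  rw [← Submodule.norm_coe]
  exact lp.norm_apply_le_norm ENNReal.top_ne_zero _ j

/-- Constant sequences, as a linear map. -/
noncomputable def constL : X →ₗ[ℝ] cSubX X where
  toFun a := wC a 0
  map_add' a b := by
    ext j
    simp [wC_apply]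
  map_smul' c a := by
    ext j
    simp [wC_apply]

@[simp] lemma constL_apply (a : X) (j : ℕ) :
    ((constL a : cSubX X) : lp (fun _ : ℕ => X) ∞) j = a := by
  simp [constL, wC_apply]

/-- single coordinate sequence -/
noncomputable def sFun (a : X) (n : ℕ) : ∀ _ : ℕ, X := fun j => if j = n then a else 0

lemma sFun_mem (a : X) (n : ℕ) : Memℓp (sFun a n) ∞ :=
  memℓp_infty ⟨‖a‖, by rintro r ⟨j, rfl⟩; simp only [sFun]; split <;> simp⟩

noncomputable def singleL (n : ℕ) : X →ₗ[ℝ] cSubX X where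
  toFun a := ⟨⟨sFun a n, sFun_mem a n⟩, mem_cSubX_iff.mpr ⟨0,
    tendsto_atTop_of_eventually_const (i₀ := n + 1)
      (fun j hj => by simp [sFun, Nat.ne_of_gt hj])⟩⟩
  map_add' a b := by
    ext j
    show sFun (a + b) n j = sFun a n j + sFun b n j
    simp only [sFun]; split <;> simp
  map_smul' c a := by
    ext j
    show sFun (c • a) n j = c • sFun a n j
    simp only [sFun]; split <;> simp

@[simp] lemma singleL_apply (n : ℕ) (a : X) (j : ℕ) :
    ((singleL n a : cSubX X) : lp (fun _ : ℕ => X) ∞) j = if j = n then a else 0 := rfl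

lemma singleL_eq (n : ℕ) (a : X) :
    singleL n a = (2⁻¹ : ℝ) • (wC a n - wC a (n + 1)) := by
  ext j
  show sFun a n j = _
  have : (((2⁻¹ : ℝ) • (wC a n - wC a (n + 1)) : cSubX X) : lp (fun _ : ℕ => X) ∞) j
      = (2⁻¹ : ℝ) • ((wC a n : lp (fun _ : ℕ => X) ∞) j - (wC a (n+1) : lp (fun _ : ℕ => X) ∞) j) := by
    rfl
  rw [this]
  rcases lt_trichotomy j n with h | h | h
  · simp [sFun, wC_apply, h, Nat.lt_succ_of_lt h, Nat.ne_of_lt h]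
  · subst h
    simp [sFun, wC_apply, Nat.lt_succ_self, lt_irrefl]
    module
  · simp [sFun, wC_apply, Nat.not_lt.mpr h.le, Nat.not_lt.mpr (Nat.succ_le_of_lt h), Nat.ne_of_gt h]


/-- The biorthogonal functionals (linear version), built from a functional `φ` on `X`. -/
noncomputable def gLin (φ : X →L[ℝ] ℝ) : ℕ → (cSubX X →ₗ[ℝ] ℝ)
  | 0 => (2⁻¹ : ℝ) • ((φ : X →ₗ[ℝ] ℝ) ∘ₗ coordL 0 + (φ : X →ₗ[ℝ] ℝ) ∘ₗ limL)
  | (n + 1) => (2⁻¹ : ℝ) • ((φ : X →ₗ[ℝ] ℝ) ∘ₗ coordL (n + 1) - (φ : X →ₗ[ℝ] ℝ) ∘ₗ coordL n)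

lemma gLin_zero_apply (φ : X →L[ℝ] ℝ) (y : cSubX X) :
    gLin φ 0 y = 2⁻¹ * (φ ((y : lp (fun _ : ℕ => X) ∞) 0) + φ (limX y)) := rfl

lemma gLin_succ_apply (φ : X →L[ℝ] ℝ) (n : ℕ) (y : cSubX X) :
    gLin φ (n + 1) y
      = 2⁻¹ * (φ ((y : lp (fun _ : ℕ => X) ∞) (n + 1)) - φ ((y : lp (fun _ : ℕ => X) ∞) n)) := rfl

lemma gLin_bound (φ : X →L[ℝ] ℝ) (n : ℕ) (y : cSubX X) : ‖gLin φ n y‖ ≤ ‖φ‖ * ‖y‖ := by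
  cases n with
  | zero =>
      rw [gLin_zero_apply]
      have h1 : ‖φ ((y : lp (fun _ : ℕ => X) ∞) 0)‖ ≤ ‖φ‖ * ‖y‖ :=
        le_trans (φ.le_opNorm _) (by
          have := norm_coordL_le 0 y
          exact mul_le_mul_of_nonneg_left (by simpa using this) (norm_nonneg φ))
      have h2 : ‖φ (limX y)‖ ≤ ‖φ‖ * ‖y‖ :=
        le_trans (φ.le_opNorm _) (mul_le_mul_of_nonneg_left (norm_limX_le y) (norm_nonneg φ))
      calc ‖2⁻¹ * (φ ((y : lp (fun _ : ℕ => X) ∞) 0) + φ (limX y))‖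
          = 2⁻¹ * ‖φ ((y : lp (fun _ : ℕ => X) ∞) 0) + φ (limX y)‖ := by
            rw [norm_mul]; norm_num
        _ ≤ 2⁻¹ * (‖φ ((y : lp (fun _ : ℕ => X) ∞) 0)‖ + ‖φ (limX y)‖) := by
            gcongr; exact norm_add_le _ _
        _ ≤ 2⁻¹ * (‖φ‖ * ‖y‖ + ‖φ‖ * ‖y‖) := by gcongr
        _ = ‖φ‖ * ‖y‖ := by ring
  | succ n =>
      rw [gLin_succ_apply]
      have h1 : ‖φ ((y : lp (fun _ : ℕ => X) ∞) (n + 1))‖ ≤ ‖φ‖ * ‖y‖ :=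
        le_trans (φ.le_opNorm _) (mul_le_mul_of_nonneg_left (by simpa using norm_coordL_le (n+1) y) (norm_nonneg φ))
      have h2 : ‖φ ((y : lp (fun _ : ℕ => X) ∞) n)‖ ≤ ‖φ‖ * ‖y‖ :=
        le_trans (φ.le_opNorm _) (mul_le_mul_of_nonneg_left (by simpa using norm_coordL_le n y) (norm_nonneg φ))
      calc ‖2⁻¹ * (φ ((y : lp (fun _ : ℕ => X) ∞) (n+1)) - φ ((y : lp (fun _ : ℕ => X) ∞) n))‖
          = 2⁻¹ * ‖φ ((y : lp (fun _ : ℕ => X) ∞) (n+1)) - φ ((y : lp (fun _ : ℕ => X) ∞) n)‖ := by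
            rw [norm_mul]; norm_num
        _ ≤ 2⁻¹ * (‖φ ((y : lp (fun _ : ℕ => X) ∞) (n+1))‖ + ‖φ ((y : lp (fun _ : ℕ => X) ∞) n)‖) := by
            gcongr; exact norm_sub_le _ _
        _ ≤ 2⁻¹ * (‖φ‖ * ‖y‖ + ‖φ‖ * ‖y‖) := by gcongr
        _ = ‖φ‖ * ‖y‖ := by ring

/-- The biorthogonal functionals, as continuous linear maps. -/
noncomputable def gCLM (φ : X →L[ℝ] ℝ) (n : ℕ) : cSubX X →L[ℝ] ℝ :=
  LinearMap.mkContinuous (gLin φ n) ‖φ‖ (gLin_bound φ n)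

@[simp] lemma gCLM_apply (φ : X →L[ℝ] ℝ) (n : ℕ) (y : cSubX X) : gCLM φ n y = gLin φ n y := rfl

lemma norm_gCLM_le (φ : X →L[ℝ] ℝ) (n : ℕ) : ‖gCLM φ n‖ ≤ ‖φ‖ :=
  LinearMap.mkContinuous_norm_le _ (norm_nonneg φ) _

/-- The key biorthogonality computation. -/
lemma gCLM_wC (φ : X →L[ℝ] ℝ) (n n' : ℕ) (a : X) :
    gCLM φ n (wC a n') = if n = n' then φ a else 0 := by
  cases n with
  | zero =>
      rw [gCLM_apply, gLin_zero_apply, wC_apply, limX_wC]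
      cases n' with
      | zero => simp; ring
      | succ m => simp [Nat.succ_pos]
  | succ n =>
      rw [gCLM_apply, gLin_succ_apply, wC_apply, wC_apply]
      rcases lt_trichotomy (n + 1) n' with h | h | h
      · rw [if_pos h, if_pos (Nat.lt_of_succ_lt h)]
        simp [Nat.ne_of_lt h]
      · subst h
        rw [if_neg (lt_irrefl _), if_pos (Nat.lt_succ_self n), if_pos rfl]
        simp; ring
      · rw [if_neg (Nat.not_lt.mpr h.le), if_neg (Nat.not_lt.mpr (Nat.lt_succ_iff.mp h))]
        simp [Nat.ne_of_gt h]

end Stmt15Aux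

/-- If the Banach space `X` admits an Auerbach basis, then so does the
space `c(X)` of `X`-valued convergent sequences with the sup norm. -/
theorem stmt15 (X : Type) [NormedAddCommGroup X] [NormedSpace ℝ X] [CompleteSpace X]
    (x : ℕ → X) (f : ℕ → X →L[ℝ] ℝ) (hX : IsAuerbachBasis x f) :
    ∃ (v : ℕ → cSubX X) (g : ℕ → (cSubX X : Submodule ℝ (lp (fun _ : ℕ => X) ∞)) →L[ℝ] ℝ),
      IsAuerbachBasis v g := by
  classical
  open Stmt15Aux in
  refine ⟨fun k => wC (x (Nat.pairEquiv.symm k).1) (Nat.pairEquiv.symm k).2,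
    fun k => gCLM (f (Nat.pairEquiv.symm k).1) (Nat.pairEquiv.symm k).2, ?_, ?_, ?_, ?_, ?_, ?_⟩
  · -- biorth_eq
    intro k
    rw [Stmt15Aux.gCLM_wC, if_pos rfl, hX.biorth_eq]
  · -- biorth_ne
    intro k j hkj
    rw [Stmt15Aux.gCLM_wC]
    by_cases hn : (Nat.pairEquiv.symm k).2 = (Nat.pairEquiv.symm j).2
    · rw [if_pos hn]
      have hm : (Nat.pairEquiv.symm k).1 ≠ (Nat.pairEquiv.symm j).1 := by
        intro hm
        apply hkj
        have : (Nat.pairEquiv.symm k) = (Nat.pairEquiv.symm j) := Prod.ext hm hn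
        exact Nat.pairEquiv.symm.injective this
      exact hX.biorth_ne _ _ hm
    · rw [if_neg hn]
  · -- norm_vec
    intro k
    rw [Stmt15Aux.norm_wC, hX.norm_vec]
  · -- norm_fun
    intro k
    have hle := Stmt15Aux.norm_gCLM_le (f (Nat.pairEquiv.symm k).1) (Nat.pairEquiv.symm k).2
    rw [hX.norm_fun] at hle
    refine le_antisymm hle ?_
    have h1 : Stmt15Aux.gCLM (f (Nat.pairEquiv.symm k).1) (Nat.pairEquiv.symm k).2
        (Stmt15Aux.wC (x (Nat.pairEquiv.symm k).1) (Nat.pairEquiv.symm k).2) = 1 := by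
      rw [Stmt15Aux.gCLM_wC, if_pos rfl, hX.biorth_eq]
    have h2 := (Stmt15Aux.gCLM (f (Nat.pairEquiv.symm k).1) (Nat.pairEquiv.symm k).2).le_opNorm
      (Stmt15Aux.wC (x (Nat.pairEquiv.symm k).1) (Nat.pairEquiv.symm k).2)
    rw [h1, Stmt15Aux.norm_wC, hX.norm_vec, mul_one] at h2
    simpa using h2
  · -- fundamental
    have hdense : ∀ (a : X) (ε : ℝ), 0 < ε →
        ∃ b ∈ Submodule.span ℝ (Set.range x), ‖a - b‖ < ε := by
      intro a ε hε
      have ha : a ∈ closure (Submodule.span ℝ (Set.range x) : Set X) := by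
        rw [← Submodule.topologicalClosure_coe, hX.fundamental]
        trivial
      obtain ⟨b, hb, hab⟩ := Metric.mem_closure_iff.mp ha ε hε
      exact ⟨b, hb, by rwa [dist_eq_norm] at hab⟩
    set S := Submodule.span ℝ (Set.range (fun k =>
      Stmt15Aux.wC (x (Nat.pairEquiv.symm k).1) (Nat.pairEquiv.symm k).2)) with hS
    have hwS : ∀ m n, Stmt15Aux.wC (x m) n ∈ S := by
      intro m n
      apply Submodule.subset_span
      exact ⟨Nat.pairEquiv (m, n), by simp⟩
    have hconstS : ∀ a ∈ Submodule.span ℝ (Set.range x), Stmt15Aux.constL a ∈ S := by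
      have hmap : Submodule.map (Stmt15Aux.constL (X := X))
          (Submodule.span ℝ (Set.range x)) ≤ S := by
        rw [Submodule.map_span]
        refine Submodule.span_le.mpr ?_
        rintro _ ⟨_, ⟨m, rfl⟩, rfl⟩
        exact hwS m 0
      exact fun a ha => hmap ⟨a, ha, rfl⟩
    have hsingleS : ∀ (j : ℕ), ∀ a ∈ Submodule.span ℝ (Set.range x),
        Stmt15Aux.singleL j a ∈ S := by
      intro j
      have hmap : Submodule.map (Stmt15Aux.singleL (X := X) j)
          (Submodule.span ℝ (Set.range x)) ≤ S := by
        rw [Submodule.map_span]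
        refine Submodule.span_le.mpr ?_
        rintro _ ⟨_, ⟨m, rfl⟩, rfl⟩
        rw [Stmt15Aux.singleL_eq]
        exact Submodule.smul_mem _ _ (Submodule.sub_mem _ (hwS m j) (hwS m (j + 1)))
      exact fun a ha => hmap ⟨a, ha, rfl⟩
    rw [Submodule.eq_top_iff']
    intro y
    rw [← SetLike.mem_coe, Submodule.topologicalClosure_coe]
    refine Metric.mem_closure_iff.mpr fun ε hε => ?_
    obtain ⟨N, hN⟩ := Metric.tendsto_atTop.mp (Stmt15Aux.tendsto_limX y) (ε / 3)
      (by positivity)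
    obtain ⟨a, haS, ha⟩ := hdense (Stmt15Aux.limX y) (ε / 3) (by positivity)
    have hbex : ∀ j : ℕ, ∃ b ∈ Submodule.span ℝ (Set.range x),
        ‖(y : lp (fun _ : ℕ => X) ∞) j - b‖ < ε / 3 := fun j => hdense _ _ (by positivity)
    choose b hbS hb using hbex
    set s : cSubX X := Stmt15Aux.constL a
      + ∑ j ∈ Finset.range N, Stmt15Aux.singleL j (b j - a) with hs
    have hsS : s ∈ S := by
      refine S.add_mem (hconstS a haS) (Submodule.sum_mem _ fun j _ => ?_)
      exact hsingleS j _ (Submodule.sub_mem _ (hbS j) haS)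
    have hcoord : ∀ j, Stmt15Aux.coordL j s = if j < N then b j else a := by
      intro j
      rw [hs, map_add, map_sum]
      have h1 : (Stmt15Aux.coordL j (Stmt15Aux.constL a) : X) = a := by
        simp
      have h2 : ∀ j' : ℕ, Stmt15Aux.coordL j (Stmt15Aux.singleL j' (b j' - a))
          = if j = j' then b j' - a else 0 := fun j' => rfl
      rw [h1]
      rw [Finset.sum_congr rfl fun j' _ => h2 j']
      rw [Finset.sum_ite_eq (Finset.range N) j (fun j' => b j' - a)]
      by_cases hj : j < N
      · rw [if_pos (Finset.mem_range.mpr hj), if_pos hj]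
        abel
      · rw [if_neg (fun h => hj (Finset.mem_range.mp h)), if_neg hj]
        abel
    refine ⟨s, hsS, ?_⟩
    rw [dist_eq_norm, ← Submodule.norm_coe]
    have hbound : ∀ j, ‖((y - s : cSubX X) : lp (fun _ : ℕ => X) ∞) j‖ ≤ 2 * ε / 3 := by
      intro j
      have : ((y - s : cSubX X) : lp (fun _ : ℕ => X) ∞) j
          = (y : lp (fun _ : ℕ => X) ∞) j - (if j < N then b j else a) := by
        have := map_sub (Stmt15Aux.coordL (X := X) j) y s
        rw [hcoord j] at this
        simpa using this
      rw [this]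
      by_cases hj : j < N
      · rw [if_pos hj]
        have := hb j
        linarith [(hb j).le]
      · rw [if_neg hj]
        have h1 : ‖(y : lp (fun _ : ℕ => X) ∞) j - Stmt15Aux.limX y‖ < ε / 3 := by
          have := hN j (Nat.not_lt.mp hj)
          rwa [dist_eq_norm] at this
        calc ‖(y : lp (fun _ : ℕ => X) ∞) j - a‖
            ≤ ‖(y : lp (fun _ : ℕ => X) ∞) j - Stmt15Aux.limX y‖
              + ‖Stmt15Aux.limX y - a‖ := by
              simpa using norm_sub_le_norm_sub_add_norm_sub
                ((y : lp (fun _ : ℕ => X) ∞) j) (Stmt15Aux.limX y) a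
          _ ≤ 2 * ε / 3 := by linarith
    calc ‖((y - s : cSubX X) : lp (fun _ : ℕ => X) ∞)‖
        ≤ 2 * ε / 3 := lp.norm_le_of_forall_le' _ hbound
      _ < ε := by linarith
  · -- total
    intro y hy
    have hmn : ∀ m n, Stmt15Aux.gCLM (f m) n y = 0 := by
      intro m n
      have := hy (Nat.pairEquiv (m, n))
      simpa using this
    have hstep : ∀ n, (y : lp (fun _ : ℕ => X) ∞) (n + 1) = (y : lp (fun _ : ℕ => X) ∞) n := by
      intro n
      have h0 : ∀ m, f m ((y : lp (fun _ : ℕ => X) ∞) (n + 1)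
          - (y : lp (fun _ : ℕ => X) ∞) n) = 0 := by
        intro m
        have h := hmn m (n + 1)
        rw [Stmt15Aux.gCLM_apply, Stmt15Aux.gLin_succ_apply] at h
        rw [map_sub]
        linarith
      exact sub_eq_zero.mp (hX.total _ h0)
    have hconst : ∀ n, (y : lp (fun _ : ℕ => X) ∞) n = (y : lp (fun _ : ℕ => X) ∞) 0 := by
      intro n
      induction n with
      | zero => rfl
      | succ n ih => rw [hstep n, ih]
    have hlim : Stmt15Aux.limX y = (y : lp (fun _ : ℕ => X) ∞) 0 :=
      Stmt15Aux.limX_eq (by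
        refine Filter.Tendsto.congr (fun n => (hconst n).symm) tendsto_const_nhds)
    have h00 : ∀ m, f m ((y : lp (fun _ : ℕ => X) ∞) 0) = 0 := by
      intro m
      have h := hmn m 0
      rw [Stmt15Aux.gCLM_apply, Stmt15Aux.gLin_zero_apply, hlim] at h
      linarith
    have h0 : (y : lp (fun _ : ℕ => X) ∞) 0 = 0 := hX.total _ h00
    apply Subtype.ext
    rw [ZeroMemClass.coe_zero, lp.eq_zero_iff_coeFn_eq_zero]
    funext n
    rw [hconst n, h0]
    rfl
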